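/- arXiv:1302.5990 — 6 statements merged into one kernel-verified Lean document; each statement's English description precedes it below -/
import Mathlib

section
/- For the block-decoupled linear system with a possibly shared (non-disjoint) input, the viability kernel of a constraint set K is contained in the cross-product of the subsystem viability kernels of the projections of K: Viab_{[0,τ]}(K,𝒰) ⊆ Viab_{[0,τ]}(Π₁K,𝒰) × Viab_{[0,τ]}(Π₂K,𝒰). -/
open Matrix Set

/-- For the block-decoupled linear system with a possibly shared
(non-disjoint) input, the viability kernel of a constraint set `K` is contained in the
cross-product of the subsystem viability kernels of the projections of `K`. -/
theorem stmt_1 {k m p : ℕ}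
    (A₁ : Matrix (Fin k) (Fin k) ℝ) (A₂ : Matrix (Fin m) (Fin m) ℝ)
    (B₁ : Matrix (Fin k) (Fin p) ℝ) (B₂ : Matrix (Fin m) (Fin p) ℝ)
    (U : Set (Fin p → ℝ)) (hUcomp : IsCompact U) (hUconv : Convex ℝ U)
    (K : Set ((Fin k → ℝ) × (Fin m → ℝ))) (hK : IsCompact K) (hKne : K.Nonempty)
    (τ : ℝ) (hτ : 0 < τ) :
    {x₀ ∈ K | ∃ u : ℝ → Fin p → ℝ, Measurable u ∧ (∀ t, u t ∈ U) ∧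
      ∃ ξ : ℝ → (Fin k → ℝ) × (Fin m → ℝ), ξ 0 = x₀ ∧
        (∀ t, HasDerivAt ξ (A₁.mulVec (ξ t).1 + B₁.mulVec (u t),
            A₂.mulVec (ξ t).2 + B₂.mulVec (u t)) t) ∧
        ∀ t ∈ Icc (0:ℝ) τ, ξ t ∈ K}
    ⊆
    {y ∈ Prod.fst '' K | ∃ u : ℝ → Fin p → ℝ, Measurable u ∧ (∀ t, u t ∈ U) ∧
      ∃ ξ₁ : ℝ → Fin k → ℝ, ξ₁ 0 = y ∧
        (∀ t, HasDerivAt ξ₁ (A₁.mulVec (ξ₁ t) + B₁.mulVec (u t)) t) ∧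
        ∀ t ∈ Icc (0:ℝ) τ, ξ₁ t ∈ Prod.fst '' K}
    ×ˢ
    {y ∈ Prod.snd '' K | ∃ u : ℝ → Fin p → ℝ, Measurable u ∧ (∀ t, u t ∈ U) ∧
      ∃ ξ₂ : ℝ → Fin m → ℝ, ξ₂ 0 = y ∧
        (∀ t, HasDerivAt ξ₂ (A₂.mulVec (ξ₂ t) + B₂.mulVec (u t)) t) ∧
        ∀ t ∈ Icc (0:ℝ) τ, ξ₂ t ∈ Prod.snd '' K} := by
  rintro x₀ ⟨hx₀K, u, hu, huU, ξ, hξ0, hξd, hξK⟩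
  constructor
  · refine ⟨⟨x₀, hx₀K, rfl⟩, u, hu, huU, fun t => (ξ t).1, by simp [hξ0], ?_, ?_⟩
    · intro t
      exact (hξd t).fst
    · intro t ht
      exact ⟨ξ t, hξK t ht, rfl⟩
  · refine ⟨⟨x₀, hx₀K, rfl⟩, u, hu, huU, fun t => (ξ t).2, by simp [hξ0], ?_, ?_⟩
    · intro t
      exact (hξd t).snd
    · intro t ht
      exact ⟨ξ t, hξK t ht, rfl⟩
end

section
/- There exists a 2-dimensional linear system with block-diagonal dynamics and non-disjoint scalar input for which the cross-product of the subsystem viability kernels is not contained in the full viability kernel. Specifically, for ẋ₁ = x₁ + u, ẋ₂ = x₂ − u with u ∈ [−1,1] and K = [−1,1]², the point (1,1) lies in Viab(Π₁K) × Viab(Π₂K) but not in Viab(K). -/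
open Set

/-- For the 2D system `ẋ₁ = x₁ + u`, `ẋ₂ = x₂ − u` with `u ∈ [−1,1]`
and `K = [−1,1]²`, the point `(1,1)` lies in the cross-product of the subsystem viability
kernels (of the projected constraints `[−1,1]`) but not in the full viability kernel of `K`. -/
theorem stmt_2 (τ : ℝ) (hτ : 0 < τ) :
    -- (1) viable for the first subsystem ẋ₁ = x₁ + u with constraint [−1,1]
    (∃ u : ℝ → ℝ, Measurable u ∧ (∀ t, u t ∈ Icc (-1:ℝ) 1) ∧
      ∃ ξ : ℝ → ℝ, ξ 0 = 1 ∧ (∀ t, HasDerivAt ξ (ξ t + u t) t) ∧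
        ∀ t ∈ Icc (0:ℝ) τ, ξ t ∈ Icc (-1:ℝ) 1) ∧
    -- (2) viable for the second subsystem ẋ₂ = x₂ − u with constraint [−1,1]
    (∃ u : ℝ → ℝ, Measurable u ∧ (∀ t, u t ∈ Icc (-1:ℝ) 1) ∧
      ∃ ξ : ℝ → ℝ, ξ 0 = 1 ∧ (∀ t, HasDerivAt ξ (ξ t - u t) t) ∧
        ∀ t ∈ Icc (0:ℝ) τ, ξ t ∈ Icc (-1:ℝ) 1) ∧
    -- (3) not viable for the full system with constraint K = [−1,1] × [−1,1]
    ¬ (∃ u : ℝ → ℝ, Measurable u ∧ (∀ t, u t ∈ Icc (-1:ℝ) 1) ∧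
      ∃ ξ : ℝ → ℝ × ℝ, ξ 0 = (1, 1) ∧
        (∀ t, HasDerivAt ξ ((ξ t).1 + u t, (ξ t).2 - u t) t) ∧
        ∀ t ∈ Icc (0:ℝ) τ, ξ t ∈ Icc (-1:ℝ) 1 ×ˢ Icc (-1:ℝ) 1) := by
  refine ⟨⟨fun _ => -1, measurable_const, fun t => by norm_num,
      fun _ => 1, rfl, fun t => by simpa using hasDerivAt_const t (1:ℝ),
      fun t _ => by norm_num⟩,
    ⟨fun _ => 1, measurable_const, fun t => by norm_num,
      fun _ => 1, rfl, fun t => by simpa using hasDerivAt_const t (1:ℝ),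
      fun t _ => by norm_num⟩, ?_⟩
  rintro ⟨u, -, -, ξ, hξ0, hξ', hξK⟩
  set s : ℝ → ℝ := fun t => (ξ t).1 + (ξ t).2 with hs
  have hs' : ∀ t, HasDerivAt s (s t) t := by
    intro t
    have h1 : HasDerivAt (fun t => (ξ t).1) ((ξ t).1 + u t) t := (hξ' t).fst
    have h2 : HasDerivAt (fun t => (ξ t).2) ((ξ t).2 - u t) t := (hξ' t).snd
    have h := h1.add h2
    exact h.congr_deriv (by simp only [hs]; ring)
  set g : ℝ → ℝ := fun t => s t * Real.exp (-t) with hg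
  have hg' : ∀ t, HasDerivAt g 0 t := by
    intro t
    have he : HasDerivAt (fun t => Real.exp (-t)) (-Real.exp (-t)) t := by
      exact ((Real.hasDerivAt_exp (-t)).comp t (hasDerivAt_neg t)).congr_deriv (by simp)
    have := (hs' t).mul he
    exact this.congr_deriv (by ring)
  have hconst : g τ = g 0 := by
    have := is_const_of_deriv_eq_zero (f := g)
      (fun t => (hg' t).differentiableAt) (fun t => (hg' t).deriv) τ 0
    exact this
  have hg0 : g 0 = 2 := by simp [hg, hs, hξ0]; norm_num
  have hsτ : s τ = 2 * Real.exp τ := by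
    have : s τ * Real.exp (-τ) = 2 := by simpa [hg] using hconst.trans hg0
    have hne : Real.exp (-τ) ≠ 0 := (Real.exp_pos _).ne'
    field_simp [Real.exp_neg] at this ⊢
    have h3 : Real.exp (-τ) * Real.exp τ = 1 := by rw [← Real.exp_add]; simp
    linear_combination Real.exp τ * this - s τ * h3
  have hle : s τ ≤ 2 := by
    obtain ⟨h1, h2⟩ := hξK τ ⟨le_of_lt hτ, le_refl τ⟩
    simp only [mem_Icc] at h1 h2
    have := add_le_add h1.2 h2.2; simp [hs]; linarith
  have : (1:ℝ) < Real.exp τ := by simpa using Real.exp_lt_exp.mpr hτ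
  linarith [hsτ ▸ hle]
end

section
/- If K = K₁ × K₂ is a cross-product of sets in the two subspaces, and the input is disjoint across the block-decoupled subsystems (𝒰 = 𝒰₁ × 𝒰₂, B block-diagonal), then the viability kernel of K equals the cross-product of the subsystem viability kernels: Viab_{[0,τ]}(K,𝒰) = Viab_{[0,τ]}(Π₁K,𝒰₁) × Viab_{[0,τ]}(Π₂K,𝒰₂). -/
open Matrix Set

/-- If `K = K₁ × K₂` is a cross-product of sets in the two subspaces, and
the input is disjoint across the block-decoupled subsystems (`𝒰 = 𝒰₁ × 𝒰₂`, `B` block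
diagonal), then the viability kernel of `K` equals the cross-product of the subsystem
viability kernels. -/
theorem stmt_5 {k m p r : ℕ}
    (A₁ : Matrix (Fin k) (Fin k) ℝ) (A₂ : Matrix (Fin m) (Fin m) ℝ)
    (B₁ : Matrix (Fin k) (Fin p) ℝ) (B₂ : Matrix (Fin m) (Fin r) ℝ)
    (U₁ : Set (Fin p → ℝ)) (hU₁comp : IsCompact U₁) (hU₁conv : Convex ℝ U₁)
    (U₂ : Set (Fin r → ℝ)) (hU₂comp : IsCompact U₂) (hU₂conv : Convex ℝ U₂)
    (K₁ : Set (Fin k → ℝ)) (hK₁ : IsCompact K₁)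
    (K₂ : Set (Fin m → ℝ)) (hK₂ : IsCompact K₂)
    (τ : ℝ) (hτ : 0 < τ) :
    {x₀ ∈ K₁ ×ˢ K₂ | ∃ u : ℝ → (Fin p → ℝ) × (Fin r → ℝ), Measurable u ∧
      (∀ t, u t ∈ U₁ ×ˢ U₂) ∧
      ∃ ξ : ℝ → (Fin k → ℝ) × (Fin m → ℝ), ξ 0 = x₀ ∧
        (∀ t, HasDerivAt ξ (A₁.mulVec (ξ t).1 + B₁.mulVec (u t).1,
            A₂.mulVec (ξ t).2 + B₂.mulVec (u t).2) t) ∧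
        ∀ t ∈ Icc (0:ℝ) τ, ξ t ∈ K₁ ×ˢ K₂}
    =
    {y ∈ K₁ | ∃ u₁ : ℝ → Fin p → ℝ, Measurable u₁ ∧ (∀ t, u₁ t ∈ U₁) ∧
      ∃ ξ₁ : ℝ → Fin k → ℝ, ξ₁ 0 = y ∧
        (∀ t, HasDerivAt ξ₁ (A₁.mulVec (ξ₁ t) + B₁.mulVec (u₁ t)) t) ∧
        ∀ t ∈ Icc (0:ℝ) τ, ξ₁ t ∈ K₁}
    ×ˢ
    {y ∈ K₂ | ∃ u₂ : ℝ → Fin r → ℝ, Measurable u₂ ∧ (∀ t, u₂ t ∈ U₂) ∧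
      ∃ ξ₂ : ℝ → Fin m → ℝ, ξ₂ 0 = y ∧
        (∀ t, HasDerivAt ξ₂ (A₂.mulVec (ξ₂ t) + B₂.mulVec (u₂ t)) t) ∧
        ∀ t ∈ Icc (0:ℝ) τ, ξ₂ t ∈ K₂} := by
  ext x₀
  constructor
  · rintro ⟨hx, u, hmu, hUu, ξ, h0, hder, hK⟩
    refine ⟨⟨hx.1, fun t => (u t).1, hmu.fst, fun t => (hUu t).1,
      fun t => (ξ t).1, by simp [h0], fun t => (hder t).fst,
      fun t ht => (hK t ht).1⟩,
      ⟨hx.2, fun t => (u t).2, hmu.snd, fun t => (hUu t).2,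
      fun t => (ξ t).2, by simp [h0], fun t => (hder t).snd,
      fun t ht => (hK t ht).2⟩⟩
  · rintro ⟨⟨hx1, u₁, hmu₁, hU₁, ξ₁, h01, hder₁, hK₁'⟩,
      ⟨hx2, u₂, hmu₂, hU₂, ξ₂, h02, hder₂, hK₂'⟩⟩
    refine ⟨⟨hx1, hx2⟩, fun t => (u₁ t, u₂ t), hmu₁.prod hmu₂,
      fun t => ⟨hU₁ t, hU₂ t⟩, fun t => (ξ₁ t, ξ₂ t),
      by simp [h01, h02], fun t => (hder₁ t).prodMk (hder₂ t),
      fun t ht => ⟨hK₁' t ht, hK₂' t ht⟩⟩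
end

section
/- If Z ∈ ℝ^{(n−k)×k} is a root of the nonsymmetric algebraic Riccati equation Z Ã₁₁ − Ã₂₂ Z − Z Ã₁₂ Z + Ã₂₁ = 0 (with coefficients as defined), then L := −B₂B₁† + Z − Z B₁B₁† simultaneously satisfies L B₁ + B₂ = 0 and L A₁₁ − A₂₂ L − L A₁₂ L + A₂₁ = δ 𝓕(Z), where 𝓕(Z) = Z(A₁₂ − B₁B₁†A₁₂)Z + (A₂₂ − B₂B₁†A₁₂)Z. -/
open Matrix

/-- If `Z` is a root of the nonsymmetric algebraic Riccati equation
`Z tA₁₁ − tA₂₂ Z − Z tA₁₂ Z + tA₂₁ = 0` (with the coefficients defined from the system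
blocks and the free parameter `δ`), then `L := −B₂B₁† + Z − Z B₁B₁†` simultaneously
satisfies `L B₁ + B₂ = 0` and `L A₁₁ − A₂₂ L − L A₁₂ L + A₂₁ = δ 𝓕(Z)`, where
`𝓕(Z) = Z(A₁₂ − B₁B₁†A₁₂)Z + (A₂₂ − B₂B₁†A₁₂)Z`. -/
theorem stmt_13 {k m p : ℕ}
    (A₁₁ : Matrix (Fin k) (Fin k) ℝ) (A₁₂ : Matrix (Fin k) (Fin m) ℝ)
    (A₂₁ : Matrix (Fin m) (Fin k) ℝ) (A₂₂ : Matrix (Fin m) (Fin m) ℝ)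
    (B₁ : Matrix (Fin k) (Fin p) ℝ) (B₂ : Matrix (Fin m) (Fin p) ℝ)
    -- `Bd` is the Moore–Penrose pseudoinverse `B₁†` of `B₁`
    (Bd : Matrix (Fin p) (Fin k) ℝ)
    (h1 : B₁ * Bd * B₁ = B₁) (h2 : Bd * B₁ * Bd = Bd)
    (h3 : (B₁ * Bd)ᵀ = B₁ * Bd) (h4 : (Bd * B₁)ᵀ = Bd * B₁)
    -- solvability condition 𝒞(B₂ᵀ) ⊆ 𝒞(B₁ᵀ)
    (hrange : LinearMap.range (Matrix.mulVecLin B₂ᵀ) ≤ LinearMap.range (Matrix.mulVecLin B₁ᵀ))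
    (δ : ℝ) (hδ0 : δ ≠ 0) (hδ1 : δ ≠ -1)
    (hinv : IsUnit (B₁ * Bd - (δ + 1) • (1 : Matrix (Fin k) (Fin k) ℝ)))
    -- the coefficient matrices
    (Ξ : Matrix (Fin k) (Fin k) ℝ)
    (hΞ : Ξ = -((B₁ * Bd - 1) * (A₁₁ + A₁₂ * (B₂ * Bd))))
    (Γ : Matrix (Fin m) (Fin k) ℝ)
    (hΓ : Γ = (A₂₂ * (B₂ * Bd) + A₂₁) - (B₂ * Bd) * (A₁₂ * (B₂ * Bd) + A₁₁))
    (tA₁₁ : Matrix (Fin k) (Fin k) ℝ)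
    (htA₁₁ : tA₁₁ = Ξ * (B₁ * Bd - (δ + 1) • (1 : Matrix (Fin k) (Fin k) ℝ))⁻¹)
    (tA₂₁ : Matrix (Fin m) (Fin k) ℝ)
    (htA₂₁ : tA₂₁ = Γ * (B₁ * Bd - (δ + 1) • (1 : Matrix (Fin k) (Fin k) ℝ))⁻¹)
    (tA₁₂ : Matrix (Fin k) (Fin m) ℝ) (htA₁₂ : tA₁₂ = B₁ * Bd * A₁₂ - A₁₂)
    (tA₂₂ : Matrix (Fin m) (Fin m) ℝ) (htA₂₂ : tA₂₂ = B₂ * Bd * A₁₂ - A₂₂)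
    -- `Z` is a root of the NARE
    (Z : Matrix (Fin m) (Fin k) ℝ)
    (hZ : Z * tA₁₁ - tA₂₂ * Z - Z * tA₁₂ * Z + tA₂₁ = 0)
    -- the corresponding `L` and `𝓕(Z)`
    (L : Matrix (Fin m) (Fin k) ℝ) (hL : L = -(B₂ * Bd) + Z - Z * (B₁ * Bd))
    (F : Matrix (Fin m) (Fin k) ℝ)
    (hF : F = Z * (A₁₂ - B₁ * Bd * A₁₂) * Z + (A₂₂ - B₂ * Bd * A₁₂) * Z) :
    L * B₁ + B₂ = 0 ∧
    L * A₁₁ - A₂₂ * L - L * A₁₂ * L + A₂₁ = δ • F := by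
  -- the projector `Bd * B₁` fixes the row space of `B₁`
  have hfix : (Bd * B₁) * B₁ᵀ = B₁ᵀ := by
    calc (Bd * B₁) * B₁ᵀ = (Bd * B₁)ᵀ * B₁ᵀ := by rw [h4]
    _ = (B₁ * (Bd * B₁))ᵀ := by rw [← Matrix.transpose_mul]
    _ = B₁ᵀ := by rw [← Matrix.mul_assoc, h1]
  have hcol : (Bd * B₁) * B₂ᵀ = B₂ᵀ := by
    ext i j
    obtain ⟨w, hw⟩ := hrange ⟨Pi.single j 1, rfl⟩
    simp only [Matrix.mulVecLin_apply] at hw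
    have h5 : ((Bd * B₁) * B₂ᵀ) *ᵥ Pi.single j (1 : ℝ) = B₂ᵀ *ᵥ Pi.single j 1 := by
      rw [← Matrix.mulVec_mulVec, ← hw, Matrix.mulVec_mulVec, hfix]
    have := congrFun h5 i
    simpa using this
  have hQB : B₂ * (Bd * B₁) = B₂ := by
    have := congrArg Matrix.transpose hcol
    rw [Matrix.transpose_mul, Matrix.transpose_transpose, h4] at this
    exact this
  constructor
  · rw [hL]
    have e1 : Z * (B₁ * Bd) * B₁ = Z * B₁ := by
      rw [Matrix.mul_assoc, Matrix.mul_assoc, ← Matrix.mul_assoc B₁, h1]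
    have e2 : B₂ * Bd * B₁ = B₂ := by rw [Matrix.mul_assoc, hQB]
    rw [Matrix.sub_mul, Matrix.add_mul, Matrix.neg_mul, e1, e2]
    abel
  · -- Part 2
    set D : Matrix (Fin k) (Fin k) ℝ := B₁ * Bd - (δ + 1) • 1 with hD
    have hDdet : IsUnit D.det := (Matrix.isUnit_iff_isUnit_det D).mp hinv
    have hDinv : D⁻¹ * D = 1 := Matrix.nonsing_inv_mul D hDdet
    have hE : Z * Ξ - tA₂₂ * Z * D - Z * tA₁₂ * Z * D + Γ = 0 := by
      have h0 := congrArg (fun M => M * D) hZ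
      simp only [Matrix.sub_mul, Matrix.add_mul, Matrix.zero_mul] at h0
      rw [htA₁₁, htA₂₁] at h0
      rw [Matrix.mul_assoc Z (Ξ * D⁻¹) D, Matrix.mul_assoc Ξ D⁻¹ D, hDinv,
        Matrix.mul_one, Matrix.mul_assoc Γ D⁻¹ D, hDinv, Matrix.mul_one] at h0
      exact h0
    have hsm : δ • F = F * (δ • (1 : Matrix (Fin k) (Fin k) ℝ)) := by
      rw [Matrix.mul_smul, Matrix.mul_one]
    have hD' : D = B₁ * Bd - (δ • (1 : Matrix (Fin k) (Fin k) ℝ) + 1) := by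
      rw [hD, add_smul, one_smul]
    set e : Matrix (Fin k) (Fin k) ℝ := δ • 1 with he
    have key : L * A₁₁ - A₂₂ * L - L * A₁₂ * L + A₂₁ =
        (Z * Ξ - tA₂₂ * Z * D - Z * tA₁₂ * Z * D + Γ) + F * e := by
      rw [hL, hF, hΞ, hΓ, htA₁₂, htA₂₂, hD']
      simp only [sub_eq_add_neg, Matrix.mul_add, Matrix.add_mul, Matrix.neg_mul,
        Matrix.mul_neg, neg_add, neg_neg, Matrix.mul_one, Matrix.one_mul, Matrix.mul_assoc]
      abel
    rw [key, hE, zero_add, hsm]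
end

section
/- Asymptotic coupling limit: with Z(δ) = Z₀(δ) (the initial value of the fixed-point iteration) where Z₀(δ) = (B₂B₁†A₁₂ − A₂₂)⁻¹ Γ (B₁B₁† − (δ+1)I)⁻¹, one has lim_{δ→±∞} ‖δ𝓕(Z(δ))‖ = ‖Γ‖, where 𝓕(Z) = Z(A₁₂ − B₁B₁†A₁₂)Z + (A₂₂ − B₂B₁†A₁₂)Z and Γ = (A₂₂B₂B₁† + A₂₁) − B₂B₁†(A₁₂B₂B₁† + A₁₁). -/
open Matrix Filter

-- the induced `L∞` operator norm (max row sum) on matrices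
attribute [local instance] Matrix.linftyOpNormedAddCommGroup Matrix.linftyOpNormedRing

/-- Asymptotic coupling limit: with
`Z(δ) = Z₀(δ) = (B₂B₁†A₁₂ − A₂₂)⁻¹ Γ (B₁B₁† − (δ+1)I)⁻¹` (the initial value of the
fixed-point iteration), `lim_{δ→±∞} ‖δ𝓕(Z(δ))‖ = ‖Γ‖`, where
`𝓕(Z) = Z(A₁₂ − B₁B₁†A₁₂)Z + (A₂₂ − B₂B₁†A₁₂)Z` and
`Γ = (A₂₂B₂B₁† + A₂₁) − B₂B₁†(A₁₂B₂B₁† + A₁₁)`. -/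
theorem stmt_18 {k m p : ℕ}
    (A₁₁ : Matrix (Fin k) (Fin k) ℝ) (A₁₂ : Matrix (Fin k) (Fin m) ℝ)
    (A₂₁ : Matrix (Fin m) (Fin k) ℝ) (A₂₂ : Matrix (Fin m) (Fin m) ℝ)
    (B₁ : Matrix (Fin k) (Fin p) ℝ) (B₂ : Matrix (Fin m) (Fin p) ℝ)
    -- `Bd` is the Moore–Penrose pseudoinverse `B₁†` of `B₁`
    (Bd : Matrix (Fin p) (Fin k) ℝ)
    (h1 : B₁ * Bd * B₁ = B₁) (h2 : Bd * B₁ * Bd = Bd)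
    (h3 : (B₁ * Bd)ᵀ = B₁ * Bd) (h4 : (Bd * B₁)ᵀ = Bd * B₁)
    (hinv : IsUnit (B₂ * Bd * A₁₂ - A₂₂))
    (Γ : Matrix (Fin m) (Fin k) ℝ)
    (hΓ : Γ = (A₂₂ * (B₂ * Bd) + A₂₁) - (B₂ * Bd) * (A₁₂ * (B₂ * Bd) + A₁₁))
    (Z₀ : ℝ → Matrix (Fin m) (Fin k) ℝ)
    (hZ₀ : ∀ δ : ℝ, Z₀ δ = (B₂ * Bd * A₁₂ - A₂₂)⁻¹ * Γ
        * (B₁ * Bd - (δ + 1) • (1 : Matrix (Fin k) (Fin k) ℝ))⁻¹)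
    (F : Matrix (Fin m) (Fin k) ℝ → Matrix (Fin m) (Fin k) ℝ)
    (hF : ∀ Z, F Z = Z * (A₁₂ - B₁ * Bd * A₁₂) * Z + (A₂₂ - B₂ * Bd * A₁₂) * Z) :
    Tendsto (fun δ : ℝ => ‖δ • F (Z₀ δ)‖) atTop (nhds ‖Γ‖) ∧
    Tendsto (fun δ : ℝ => ‖δ • F (Z₀ δ)‖) atBot (nhds ‖Γ‖) := by
  have hdet : IsUnit (B₂ * Bd * A₁₂ - A₂₂).det :=
    (Matrix.isUnit_iff_isUnit_det _).mp hinv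
  have hWX : ∀ X : Matrix (Fin m) (Fin k) ℝ,
      (B₂ * (Bd * A₁₂) - A₂₂) * ((B₂ * (Bd * A₁₂) - A₂₂)⁻¹ * X) = X := by
    intro X
    rw [show B₂ * (Bd * A₁₂) = B₂ * Bd * A₁₂ from (Matrix.mul_assoc _ _ _).symm,
      ← Matrix.mul_assoc, Matrix.mul_nonsing_inv _ hdet, Matrix.one_mul]
  have hB : ∀ (n : ℕ) (X : Matrix (Fin p) (Fin n) ℝ), B₁ * (Bd * (B₁ * X)) = B₁ * X := by
    intro n X; rw [← Matrix.mul_assoc, ← Matrix.mul_assoc, h1]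
  have hP : (B₁ * Bd) * (B₁ * Bd) = B₁ * Bd := by
    rw [Matrix.mul_assoc, hB]
  -- the limiting function
  set G : ℝ → Matrix (Fin m) (Fin k) ℝ := fun d =>
    ((1 - d) * d) • ((B₂ * Bd * A₁₂ - A₂₂)⁻¹ * Γ * (A₁₂ - B₁ * Bd * A₁₂)
        * ((B₂ * Bd * A₁₂ - A₂₂)⁻¹ * Γ))
      + (d * d) • ((B₂ * Bd * A₁₂ - A₂₂)⁻¹ * Γ * (A₁₂ - B₁ * Bd * A₁₂)
        * ((B₂ * Bd * A₁₂ - A₂₂)⁻¹ * Γ) * (B₁ * Bd))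
      + (1 - d) • Γ + d • (Γ * (B₁ * Bd)) with hGdef
  have hG0 : G 0 = Γ := by simp [hGdef]
  have hGcont : Continuous G := by
    apply Continuous.add
    apply Continuous.add
    apply Continuous.add
    · exact ((continuous_const.sub continuous_id).mul continuous_id).smul continuous_const
    · exact (continuous_id.mul continuous_id).smul continuous_const
    · exact (continuous_const.sub continuous_id).smul continuous_const
    · exact continuous_id.smul continuous_const
  -- the key algebraic identity
  have key : ∀ δ : ℝ, δ ≠ 0 → δ + 1 ≠ 0 → δ • F (Z₀ δ) = G ((δ + 1)⁻¹) := by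
    intro δ hδ hδ1
    have hMinv : (B₁ * Bd - (δ + 1) • (1 : Matrix (Fin k) (Fin k) ℝ))⁻¹
        = (-(δ + 1)⁻¹) • ((1 : Matrix (Fin k) (Fin k) ℝ) + δ⁻¹ • (B₁ * Bd)) := by
      apply Matrix.inv_eq_right_inv
      simp only [mul_add, add_mul, sub_mul, mul_sub, mul_one, one_mul, smul_mul_assoc,
        mul_smul_comm, smul_smul, smul_sub, smul_add, hP]
      match_scalars <;> field_simp <;> ring
    have hneg : A₂₂ - B₂ * Bd * A₁₂ = -(B₂ * Bd * A₁₂ - A₂₂) := by abel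
    rw [hF, hZ₀, hMinv, hneg, hGdef]
    simp only [Matrix.neg_mul, Matrix.mul_assoc, hWX]
    simp only [neg_mul, Matrix.mul_add, Matrix.add_mul, Matrix.sub_mul,
      Matrix.mul_sub, Matrix.mul_one, Matrix.one_mul, Matrix.smul_mul, Matrix.mul_smul,
      smul_smul, smul_sub, smul_add, neg_smul, smul_neg, Matrix.neg_mul, Matrix.mul_neg,
      Matrix.mul_assoc, hB, hWX]
    match_scalars <;> field_simp <;> ring
  -- scalar limits
  have hd_top : Tendsto (fun δ : ℝ => (δ + 1)⁻¹) atTop (nhds 0) :=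
    tendsto_inv_atTop_zero.comp (tendsto_atTop_add_const_right _ 1 tendsto_id)
  have hd_bot : Tendsto (fun δ : ℝ => (δ + 1)⁻¹) atBot (nhds 0) := by
    have h : Tendsto (fun δ : ℝ => -(δ + 1)) atBot atTop :=
      tendsto_neg_atBot_atTop.comp (tendsto_atBot_add_const_right _ 1 tendsto_id)
    have h2 := (tendsto_inv_atTop_zero.comp h).neg
    rw [neg_zero] at h2
    refine h2.congr fun δ => ?_
    show -(-(δ + 1))⁻¹ = (δ + 1)⁻¹
    rw [← neg_inv, neg_neg]
  have hGt : Tendsto G (nhds 0) (nhds Γ) := by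
    have := hGcont.continuousAt (x := (0 : ℝ))
    rwa [ContinuousAt, hG0] at this
  constructor
  · have hev : (fun δ : ℝ => G ((δ + 1)⁻¹)) =ᶠ[atTop] fun δ : ℝ => δ • F (Z₀ δ) := by
      filter_upwards [eventually_gt_atTop (0 : ℝ)] with δ hδ
      exact (key δ (ne_of_gt hδ) (by linarith)).symm
    exact ((hGt.comp hd_top).congr' hev).norm
  · have hev : (fun δ : ℝ => G ((δ + 1)⁻¹)) =ᶠ[atBot] fun δ : ℝ => δ • F (Z₀ δ) := by
      filter_upwards [eventually_lt_atBot (-1 : ℝ)] with δ hδ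
      exact (key δ (by linarith) (by linarith)).symm
    exact ((hGt.comp hd_bot).congr' hev).norm
end

section
/- Conservative coupling bound: under the stated definitions, for all δ ∈ ℝ\{−1,0}, ‖δ𝓕(Z(δ))‖ ≤ (1/|δ|)((|δ|+1)/|δ+1|)² a + ((|δ|+1)/|δ+1|) b, where a = α(b/β)², b = 3‖B₁B₁†‖γβ, γ = ‖Γ‖·‖(A₂₂ − B₂B₁†A₁₂)⁻¹‖, α = ‖A₁₂ − B₁B₁†A₁₂‖, β = ‖A₂₂ − B₂B₁†A₁₂‖, and Z(δ) = Z₀ + D with ‖D‖ ≤ 2‖A₀‖‖Z₀‖/(‖A₀‖ + α‖Z₀‖). -/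
open Matrix

-- the induced `L∞` operator norm (max row sum) on matrices
attribute [local instance] Matrix.linftyOpNormedAddCommGroup Matrix.linftyOpNormedRing
attribute [local instance] Matrix.linftyOpNormedSpace

set_option maxHeartbeats 1000000 in
/-- Conservative coupling bound: for all `δ ∈ ℝ\{−1,0}` (with
`B₁B₁† − (δ+1)I` invertible),
`‖δ𝓕(Z(δ))‖ ≤ (1/|δ|)((|δ|+1)/|δ+1|)² a + ((|δ|+1)/|δ+1|) b`, where
`a = α(b/β)²`, `b = 3‖B₁B₁†‖γβ`, `γ = ‖Γ‖‖(A₂₂ − B₂B₁†A₁₂)⁻¹‖`,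
`α = ‖A₁₂ − B₁B₁†A₁₂‖`, `β = ‖A₂₂ − B₂B₁†A₁₂‖`, and `Z(δ) = Z₀ + D` with
`‖D‖ ≤ 2‖A₀‖‖Z₀‖/(‖A₀‖ + α‖Z₀‖)`. -/
theorem stmt_19 {k m p : ℕ}
    (A₁₁ : Matrix (Fin k) (Fin k) ℝ) (A₁₂ : Matrix (Fin k) (Fin m) ℝ)
    (A₂₁ : Matrix (Fin m) (Fin k) ℝ) (A₂₂ : Matrix (Fin m) (Fin m) ℝ)
    (B₁ : Matrix (Fin k) (Fin p) ℝ) (B₂ : Matrix (Fin m) (Fin p) ℝ)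
    -- `Bd` is the Moore–Penrose pseudoinverse `B₁†` of `B₁`
    (Bd : Matrix (Fin p) (Fin k) ℝ)
    (h1 : B₁ * Bd * B₁ = B₁) (h2 : Bd * B₁ * Bd = Bd)
    (h3 : (B₁ * Bd)ᵀ = B₁ * Bd) (h4 : (Bd * B₁)ᵀ = Bd * B₁)
    (hinvβ : IsUnit (A₂₂ - B₂ * Bd * A₁₂))
    (hBnorm : 1 ≤ ‖B₁ * Bd‖)
    (δ : ℝ) (hδ0 : δ ≠ 0) (hδ1 : δ ≠ -1)
    (hinvδ : IsUnit (B₁ * Bd - (δ + 1) • (1 : Matrix (Fin k) (Fin k) ℝ)))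
    -- the data of the fixed-point iteration
    (Γ : Matrix (Fin m) (Fin k) ℝ)
    (hΓ : Γ = (A₂₂ * (B₂ * Bd) + A₂₁) - (B₂ * Bd) * (A₁₂ * (B₂ * Bd) + A₁₁))
    (Ξ : Matrix (Fin k) (Fin k) ℝ)
    (hΞ : Ξ = -((B₁ * Bd - 1) * (A₁₁ + A₁₂ * (B₂ * Bd))))
    (Z₀ : Matrix (Fin m) (Fin k) ℝ)
    (hZ₀ : Z₀ = (B₂ * Bd * A₁₂ - A₂₂)⁻¹ * Γ
        * (B₁ * Bd - (δ + 1) • (1 : Matrix (Fin k) (Fin k) ℝ))⁻¹)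
    (A₀ : Matrix (Fin k) (Fin k) ℝ)
    (hA₀ : A₀ = Ξ * (B₁ * Bd - (δ + 1) • (1 : Matrix (Fin k) (Fin k) ℝ))⁻¹
        - (B₁ * Bd * A₁₂ - A₁₂) * Z₀)
    -- the constants
    (α β γ a b : ℝ)
    (hα : α = ‖A₁₂ - B₁ * Bd * A₁₂‖) (hβ : β = ‖A₂₂ - B₂ * Bd * A₁₂‖)
    (hγ : γ = ‖Γ‖ * ‖(A₂₂ - B₂ * Bd * A₁₂)⁻¹‖)
    (hb : b = 3 * ‖B₁ * Bd‖ * γ * β) (ha : a = α * (b / β) ^ 2)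
    -- `D` satisfies the fixed-point bound, and `Z(δ) = Z₀ + D`
    (D : Matrix (Fin m) (Fin k) ℝ)
    (hD : ‖D‖ ≤ 2 * ‖A₀‖ * ‖Z₀‖ / (‖A₀‖ + α * ‖Z₀‖)) :
    ‖δ • ((Z₀ + D) * (A₁₂ - B₁ * Bd * A₁₂) * (Z₀ + D)
        + (A₂₂ - B₂ * Bd * A₁₂) * (Z₀ + D))‖
      ≤ (1 / |δ|) * ((|δ| + 1) / |δ + 1|) ^ 2 * a + ((|δ| + 1) / |δ + 1|) * b := by
  -- basic scalar facts
  have hδ1' : δ + 1 ≠ 0 := fun h => hδ1 (by linarith)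
  have hu : (0:ℝ) < |δ| := abs_pos.mpr hδ0
  have hc : (0:ℝ) < |δ + 1| := abs_pos.mpr hδ1'
  have hα0 : 0 ≤ α := hα ▸ norm_nonneg _
  have hβ0 : 0 ≤ β := hβ ▸ norm_nonneg _
  have hγ0 : 0 ≤ γ := hγ ▸ mul_nonneg (norm_nonneg _) (norm_nonneg _)
  have hb0 : 0 ≤ b := by rw [hb]; positivity
  have ha0 : 0 ≤ a := by rw [ha]; positivity
  -- rule out `k = 0`
  have hk : Nonempty (Fin k) := by
    by_contra hkE
    have hkE' : IsEmpty (Fin k) := not_nonempty_iff.mp hkE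
    have : B₁ * Bd = 0 := by ext i j; exact isEmptyElim i
    rw [this, norm_zero] at hBnorm
    linarith
  -- degenerate case `m = 0`
  rcases isEmpty_or_nonempty (Fin m) with hmE | hm
  · have hz : (Z₀ + D) * (A₁₂ - B₁ * Bd * A₁₂) * (Z₀ + D)
        + (A₂₂ - B₂ * Bd * A₁₂) * (Z₀ + D) = 0 := by
      ext i j; exact isEmptyElim i
    rw [hz, smul_zero, norm_zero]
    have h1' : 0 ≤ 1 / |δ| * ((|δ| + 1) / |δ + 1|) ^ 2 * a := by
      apply mul_nonneg _ ha0; positivity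
    have h2' : 0 ≤ (|δ| + 1) / |δ + 1| * b := by
      apply mul_nonneg _ hb0; positivity
    linarith
  -- main case: `β > 0`
  have hβpos : 0 < β := by
    rcases lt_or_eq_of_le hβ0 with h | h
    · exact h
    · exfalso
      have h0 : A₂₂ - B₂ * Bd * A₁₂ = 0 := by
        have := h.symm
        rw [hβ] at this
        exact norm_eq_zero.mp this
      rw [h0] at hinvβ
      have : (0 : Matrix (Fin m) (Fin m) ℝ) = 1 := isUnit_zero_iff.mp hinvβ
      exact one_ne_zero this.symm
  -- notation
  set P : Matrix (Fin k) (Fin k) ℝ := B₁ * Bd with hP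
  have hPP : P * P = P := by
    calc P * P = (B₁ * Bd * B₁) * Bd := by rw [hP, ← Matrix.mul_assoc]
    _ = P := by rw [h1]
  set N : Matrix (Fin k) (Fin k) ℝ := P - (δ + 1) • 1 with hN
  -- explicit inverse of `N`
  have hkey : N * (P - (1 - (δ + 1)) • 1) = ((δ + 1) * (1 - (δ + 1))) • 1 := by
    rw [hN]
    simp only [sub_mul, mul_sub, smul_mul_assoc, mul_smul_comm, one_mul, mul_one,
      smul_smul, hPP]
    module
  have hscal : (δ + 1) * (1 - (δ + 1)) ≠ 0 := by
    apply mul_ne_zero hδ1'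
    intro h; exact hδ0 (by linarith)
  have hNinv : N⁻¹ = ((δ + 1) * (1 - (δ + 1)))⁻¹ • (P - (1 - (δ + 1)) • 1) := by
    apply inv_eq_right_inv
    rw [mul_smul_comm, hkey, smul_smul, inv_mul_cancel₀ hscal, one_smul]
  have hnormN : ‖N⁻¹‖ ≤ (|δ| + 1) * ‖P‖ / (|δ + 1| * |δ|) := by
    rw [hNinv]
    have e1 : ‖((δ + 1) * (1 - (δ + 1)))⁻¹ • (P - (1 - (δ + 1)) • 1)‖
        ≤ |((δ + 1) * (1 - (δ + 1)))⁻¹| * (‖P‖ + |1 - (δ + 1)| * ‖(1 : Matrix (Fin k) (Fin k) ℝ)‖) := by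
      refine (norm_smul_le _ _).trans ?_
      rw [Real.norm_eq_abs]
      apply mul_le_mul_of_nonneg_left _ (abs_nonneg _)
      refine (norm_sub_le _ _).trans ?_
      gcongr
      refine (norm_smul_le _ _).trans ?_
      rw [Real.norm_eq_abs]
    refine e1.trans ?_
    have hone : ‖(1 : Matrix (Fin k) (Fin k) ℝ)‖ = 1 := norm_one
    have habs : |1 - (δ + 1)| = |δ| := by
      rw [show (1 : ℝ) - (δ + 1) = -δ by ring, abs_neg]
    have habs2 : |((δ + 1) * (1 - (δ + 1)))⁻¹| = (|δ + 1| * |δ|)⁻¹ := by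
      rw [abs_inv, abs_mul, habs]
    rw [hone, mul_one, habs, habs2]
    rw [inv_mul_eq_div]
    have hPn : 1 ≤ ‖P‖ := hBnorm
    gcongr
    nlinarith [hPn, hu.le]
  -- norm of Z₀
  have hinvdet : IsUnit (A₂₂ - B₂ * Bd * A₁₂).det :=
    (Matrix.isUnit_iff_isUnit_det _).mp hinvβ
  have hBinv : (B₂ * Bd * A₁₂ - A₂₂)⁻¹ = -(A₂₂ - B₂ * Bd * A₁₂)⁻¹ := by
    apply inv_eq_right_inv
    rw [show B₂ * Bd * A₁₂ - A₂₂ = -(A₂₂ - B₂ * Bd * A₁₂) by noncomm_ring,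
      neg_mul_neg]
    exact Matrix.mul_nonsing_inv _ hinvdet
  have hZ0n : ‖Z₀‖ ≤ γ * ‖N⁻¹‖ := by
    rw [hZ₀]
    calc ‖(B₂ * Bd * A₁₂ - A₂₂)⁻¹ * Γ * N⁻¹‖
        ≤ ‖(B₂ * Bd * A₁₂ - A₂₂)⁻¹ * Γ‖ * ‖N⁻¹‖ := Matrix.linfty_opNorm_mul _ _
      _ ≤ ‖(B₂ * Bd * A₁₂ - A₂₂)⁻¹‖ * ‖Γ‖ * ‖N⁻¹‖ := by
          gcongr; exact Matrix.linfty_opNorm_mul _ _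
      _ = γ * ‖N⁻¹‖ := by rw [hBinv, norm_neg, hγ, mul_comm ‖Γ‖]
  -- norm of D and Z
  have hD2 : ‖D‖ ≤ 2 * ‖Z₀‖ := by
    refine hD.trans ?_
    rcases eq_or_ne (‖A₀‖ + α * ‖Z₀‖) 0 with h | h
    · have hA0 : ‖A₀‖ = 0 := by
        nlinarith [norm_nonneg A₀, norm_nonneg Z₀, mul_nonneg hα0 (norm_nonneg Z₀)]
      rw [hA0]; simp
    · have hpos : 0 < ‖A₀‖ + α * ‖Z₀‖ :=
        lt_of_le_of_ne (by positivity) (Ne.symm h)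
      rw [div_le_iff₀ hpos]
      nlinarith [norm_nonneg A₀, norm_nonneg Z₀, mul_nonneg hα0 (norm_nonneg Z₀),
        mul_nonneg (mul_nonneg hα0 (norm_nonneg Z₀)) (norm_nonneg Z₀)]
  have hZn : ‖Z₀ + D‖ ≤ 3 * ‖Z₀‖ := by
    calc ‖Z₀ + D‖ ≤ ‖Z₀‖ + ‖D‖ := norm_add_le _ _
      _ ≤ 3 * ‖Z₀‖ := by linarith
  -- combined bound on t = ‖Z₀ + D‖
  set t := ‖Z₀ + D‖ with htdef
  have ht0 : 0 ≤ t := norm_nonneg _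
  set s := (|δ| + 1) / |δ + 1| with hsdef
  have hs0 : 0 < s := by positivity
  have hr : b / β = 3 * ‖P‖ * γ := by
    rw [hb]; field_simp
  have ht : t ≤ (b / β) * s / |δ| := by
    have step : t ≤ 3 * (γ * ((|δ| + 1) * ‖P‖ / (|δ + 1| * |δ|))) := by
      refine hZn.trans ?_
      have := hZ0n.trans (mul_le_mul_of_nonneg_left hnormN hγ0)
      linarith
    refine step.trans (le_of_eq ?_)
    rw [hr, hsdef]; field_simp
  have ht' : |δ| * t ≤ (b / β) * s := by
    rw [le_div_iff₀ hu] at ht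
    linarith [ht]
  -- bound the norm of the expression
  have hFn : ‖(Z₀ + D) * (A₁₂ - B₁ * Bd * A₁₂) * (Z₀ + D)
      + (A₂₂ - B₂ * Bd * A₁₂) * (Z₀ + D)‖ ≤ α * t ^ 2 + β * t := by
    refine (norm_add_le _ _).trans ?_
    have e1 : ‖(Z₀ + D) * (A₁₂ - B₁ * Bd * A₁₂) * (Z₀ + D)‖ ≤ t * α * t := by
      calc ‖(Z₀ + D) * (A₁₂ - B₁ * Bd * A₁₂) * (Z₀ + D)‖
          ≤ ‖(Z₀ + D) * (A₁₂ - B₁ * Bd * A₁₂)‖ * ‖Z₀ + D‖ := Matrix.linfty_opNorm_mul _ _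
        _ ≤ ‖Z₀ + D‖ * ‖A₁₂ - B₁ * Bd * A₁₂‖ * ‖Z₀ + D‖ := by
            gcongr; exact Matrix.linfty_opNorm_mul _ _
        _ = t * α * t := by rw [hα]
    have e2 : ‖(A₂₂ - B₂ * Bd * A₁₂) * (Z₀ + D)‖ ≤ β * t := by
      calc ‖(A₂₂ - B₂ * Bd * A₁₂) * (Z₀ + D)‖
          ≤ ‖A₂₂ - B₂ * Bd * A₁₂‖ * ‖Z₀ + D‖ := Matrix.linfty_opNorm_mul _ _
        _ = β * t := by rw [hβ]
    nlinarith [e1, e2]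
  have hsmul : ‖δ • ((Z₀ + D) * (A₁₂ - B₁ * Bd * A₁₂) * (Z₀ + D)
      + (A₂₂ - B₂ * Bd * A₁₂) * (Z₀ + D))‖ ≤ |δ| * (α * t ^ 2 + β * t) := by
    refine (norm_smul_le _ _).trans ?_
    rw [Real.norm_eq_abs]
    exact mul_le_mul_of_nonneg_left hFn (abs_nonneg _)
  refine hsmul.trans ?_
  -- final arithmetic
  have hβr : β * (b / β) = b := by
    field_simp
  have hA : |δ| * (α * t ^ 2) ≤ 1 / |δ| * s ^ 2 * a := by
    rw [ha]
    rw [show (1:ℝ) / |δ| * s ^ 2 * (α * (b / β) ^ 2)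
        = α * ((b / β) * s) ^ 2 / |δ| by ring, le_div_iff₀ hu]
    have := mul_le_mul ht' ht' (by positivity) (by positivity)
    nlinarith [this, hα0]
  have hB : |δ| * (β * t) ≤ s * b := by
    have := mul_le_mul_of_nonneg_left ht' hβ0
    calc |δ| * (β * t) = β * (|δ| * t) := by ring
      _ ≤ β * ((b / β) * s) := this
      _ = s * b := by rw [show β * ((b / β) * s) = β * (b / β) * s by ring, hβr]; ring
  calc |δ| * (α * t ^ 2 + β * t) = |δ| * (α * t ^ 2) + |δ| * (β * t) := by ring
    _ ≤ 1 / |δ| * s ^ 2 * a + s * b := by linarith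
    _ = 1 / |δ| * ((|δ| + 1) / |δ + 1|) ^ 2 * a + (|δ| + 1) / |δ + 1| * b := by rw [hsdef]
end
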